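/- Let b_1, b_2 ∈ ℂ[λ] be coprime nonconstant polynomials, each having only simple roots, and let a ∈ ℂ[λ] have degree at most deg b_1 + deg b_2 − 2. Then the sum over the roots β of b_1 of a(β)/(b_1'(β)·b_2(β)) equals minus the sum over the roots β of b_2 of a(β)/(b_2'(β)·b_1(β)). -/

import Mathlib

open Polynomial Finset

lemma lc_basisDivisor (x y : ℂ) :
    (Lagrange.basisDivisor x y).leadingCoeff = (x - y)⁻¹ := by
  rcases eq_or_ne x y with rfl | h
  · simp [Lagrange.basisDivisor_self]
  · rw [Lagrange.basisDivisor, leadingCoeff_mul, leadingCoeff_C,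
      (monic_X_sub_C y).leadingCoeff, mul_one]

lemma lc_basis (s : Finset ℂ) (i : ℂ) :
    (Lagrange.basis s id i).leadingCoeff = Lagrange.nodalWeight s id i := by
  rw [Lagrange.basis, leadingCoeff_prod, Lagrange.nodalWeight]
  simp [lc_basisDivisor]

lemma key_sum (s : Finset ℂ) (a : Polynomial ℂ)
    (h : a.degree < ((s.card - 1 : ℕ) : WithBot ℕ)) :
    ∑ β ∈ s, a.eval β * Lagrange.nodalWeight s id β = 0 := by
  have hinj : Set.InjOn id (s : Set ℂ) := Function.injective_id.injOn
  have hd : a.degree < (s.card : WithBot ℕ) :=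
    lt_of_lt_of_le h (by exact_mod_cast Nat.sub_le _ _)
  have hrep := Lagrange.eq_interpolate hinj hd
  have h0 : a.coeff (s.card - 1) = 0 := coeff_eq_zero_of_degree_lt h
  rw [hrep, Lagrange.interpolate_apply, finset_sum_coeff] at h0
  rw [← h0]
  refine Finset.sum_congr rfl fun β hβ => ?_
  rw [coeff_C_mul, ← Lagrange.natDegree_basis hinj hβ, coeff_natDegree, lc_basis, id_eq]

theorem stmt11 (b₁ b₂ a : Polynomial ℂ)
    (hb1 : 0 < b₁.degree) (hb2 : 0 < b₂.degree)
    (h1 : b₁.roots.Nodup) (h2 : b₂.roots.Nodup)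
    (hcop : ∀ μ : ℂ, ¬ (b₁.eval μ = 0 ∧ b₂.eval μ = 0))
    (ha : a.degree ≤ ((b₁.natDegree + b₂.natDegree - 2 : ℕ) : ℕ)) :
    ∑ β ∈ b₁.roots.toFinset, a.eval β / ((derivative b₁).eval β * b₂.eval β)
      = - ∑ β ∈ b₂.roots.toFinset, a.eval β / ((derivative b₂).eval β * b₁.eval β) := by
  classical
  have hb1ne : b₁ ≠ 0 := fun h => by simp [h] at hb1
  have hb2ne : b₂ ≠ 0 := fun h => by simp [h] at hb2
  set c₁ := b₁.leadingCoeff with hc₁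
  set c₂ := b₂.leadingCoeff with hc₂
  have hc1ne : c₁ ≠ 0 := leadingCoeff_ne_zero.mpr hb1ne
  have hc2ne : c₂ ≠ 0 := leadingCoeff_ne_zero.mpr hb2ne
  set s₁ := b₁.roots.toFinset with hs₁
  set s₂ := b₂.roots.toFinset with hs₂
  set s := s₁ ∪ s₂ with hs
  -- root membership
  have hmem1 : ∀ β ∈ s₁, b₁.eval β = 0 := fun β hβ =>
    (isRoot_of_mem_roots (Multiset.mem_toFinset.mp hβ))
  have hmem2 : ∀ β ∈ s₂, b₂.eval β = 0 := fun β hβ =>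
    (isRoot_of_mem_roots (Multiset.mem_toFinset.mp hβ))
  have hdisj : Disjoint s₁ s₂ := by
    rw [Finset.disjoint_left]
    intro β hβ1 hβ2
    exact hcop β ⟨hmem1 β hβ1, hmem2 β hβ2⟩
  -- factorizations
  have hrep1 : b₁ = C c₁ * Lagrange.nodal s₁ id := by
    have := Splits.eq_prod_roots (IsAlgClosed.splits b₁)
    rw [this, Lagrange.nodal]
    congr 1
    rw [Finset.prod, hs₁, Multiset.toFinset_val, h1.dedup]
    simp
  have hrep2 : b₂ = C c₂ * Lagrange.nodal s₂ id := by
    have := Splits.eq_prod_roots (IsAlgClosed.splits b₂)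
    rw [this, Lagrange.nodal]
    congr 1
    rw [Finset.prod, hs₂, Multiset.toFinset_val, h2.dedup]
    simp
  -- cardinalities
  have hcard1 : s₁.card = b₁.natDegree := by
    rw [hs₁, Multiset.toFinset_card_of_nodup h1]
    exact splits_iff_card_roots.mp (IsAlgClosed.splits b₁)
  have hcard2 : s₂.card = b₂.natDegree := by
    rw [hs₂, Multiset.toFinset_card_of_nodup h2]
    exact splits_iff_card_roots.mp (IsAlgClosed.splits b₂)
  have hcards : s.card = b₁.natDegree + b₂.natDegree := by
    rw [hs, Finset.card_union_of_disjoint hdisj, hcard1, hcard2]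
  have hn1 : 1 ≤ b₁.natDegree := natDegree_pos_iff_degree_pos.mpr hb1
  have hn2 : 1 ≤ b₂.natDegree := natDegree_pos_iff_degree_pos.mpr hb2
  -- the key identity
  have hdeg : a.degree < ((s.card - 1 : ℕ) : WithBot ℕ) := by
    refine lt_of_le_of_lt ha ?_
    rw [hcards]
    exact_mod_cast Nat.sub_lt_sub_left (by omega) (by omega)
  have hkey := key_sum s a hdeg
  rw [hs, Finset.sum_union hdisj] at hkey
  -- term computation on s₁
  have hterm1 : ∀ β ∈ s₁,
      a.eval β / ((derivative b₁).eval β * b₂.eval β)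
        = a.eval β * Lagrange.nodalWeight s id β / (c₁ * c₂) := by
    intro β hβ
    have hβs : β ∈ s := Finset.mem_union_left _ hβ
    have hβ2 : β ∉ s₂ := Finset.disjoint_left.mp hdisj hβ
    have hderiv : (derivative b₁).eval β = c₁ * ∏ γ ∈ s₁.erase β, (β - γ) := by
      have hnd := Lagrange.eval_nodal_derivative_eval_node_eq (s := s₁) (v := id) hβ
      simp only [id_eq] at hnd
      rw [hrep1, derivative_mul, derivative_C, zero_mul, eval_add, eval_zero, zero_add,
        eval_mul, eval_C, hnd, Lagrange.eval_nodal]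
      simp
    have heval2 : b₂.eval β = c₂ * ∏ γ ∈ s₂, (β - γ) := by
      rw [hrep2, eval_mul, eval_C, Lagrange.eval_nodal]
      simp
    have hprod : (∏ γ ∈ s₁.erase β, (β - γ)) * ∏ γ ∈ s₂, (β - γ)
        = ∏ γ ∈ s.erase β, (β - γ) := by
      rw [hs, Finset.erase_union_distrib, Finset.erase_eq_of_notMem hβ2,
        Finset.prod_union (Finset.disjoint_of_subset_left (Finset.erase_subset _ _) hdisj)]
    have hw : Lagrange.nodalWeight s id β = (∏ γ ∈ s.erase β, (β - γ))⁻¹ := by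
      rw [Lagrange.nodalWeight, ← Finset.prod_inv_distrib]
      simp
    have hne : (∏ γ ∈ s.erase β, (β - γ)) ≠ 0 := by
      refine Finset.prod_ne_zero_iff.mpr fun γ hγ => ?_
      have := (Finset.mem_erase.mp hγ).1
      exact sub_ne_zero_of_ne (Ne.symm this)
    rw [hderiv, heval2, hw, ← hprod]
    have hne1 : (∏ γ ∈ s₁.erase β, (β - γ)) ≠ 0 :=
      Finset.prod_ne_zero_iff.mpr fun γ hγ =>
        sub_ne_zero_of_ne (Ne.symm (Finset.mem_erase.mp hγ).1)
    have hne2 : (∏ γ ∈ s₂, (β - γ)) ≠ 0 :=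
      Finset.prod_ne_zero_iff.mpr fun γ hγ =>
        sub_ne_zero_of_ne fun h => hβ2 (h ▸ hγ)
    field_simp
  have hterm2 : ∀ β ∈ s₂,
      a.eval β / ((derivative b₂).eval β * b₁.eval β)
        = a.eval β * Lagrange.nodalWeight s id β / (c₁ * c₂) := by
    intro β hβ
    have hβs : β ∈ s := Finset.mem_union_right _ hβ
    have hβ1 : β ∉ s₁ := Finset.disjoint_right.mp hdisj hβ
    have hderiv : (derivative b₂).eval β = c₂ * ∏ γ ∈ s₂.erase β, (β - γ) := by
      have hnd := Lagrange.eval_nodal_derivative_eval_node_eq (s := s₂) (v := id) hβ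
      simp only [id_eq] at hnd
      rw [hrep2, derivative_mul, derivative_C, zero_mul, eval_add, eval_zero, zero_add,
        eval_mul, eval_C, hnd, Lagrange.eval_nodal]
      simp
    have heval1 : b₁.eval β = c₁ * ∏ γ ∈ s₁, (β - γ) := by
      rw [hrep1, eval_mul, eval_C, Lagrange.eval_nodal]
      simp
    have hprod : (∏ γ ∈ s₁, (β - γ)) * ∏ γ ∈ s₂.erase β, (β - γ)
        = ∏ γ ∈ s.erase β, (β - γ) := by
      rw [hs, Finset.erase_union_distrib, Finset.erase_eq_of_notMem hβ1,
        Finset.prod_union (Finset.disjoint_of_subset_right (Finset.erase_subset _ _) hdisj)]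
    have hw : Lagrange.nodalWeight s id β = (∏ γ ∈ s.erase β, (β - γ))⁻¹ := by
      rw [Lagrange.nodalWeight, ← Finset.prod_inv_distrib]
      simp
    rw [hderiv, heval1, hw, ← hprod]
    have hne1 : (∏ γ ∈ s₁, (β - γ)) ≠ 0 :=
      Finset.prod_ne_zero_iff.mpr fun γ hγ =>
        sub_ne_zero_of_ne fun h => hβ1 (h ▸ hγ)
    have hne2 : (∏ γ ∈ s₂.erase β, (β - γ)) ≠ 0 :=
      Finset.prod_ne_zero_iff.mpr fun γ hγ =>
        sub_ne_zero_of_ne (Ne.symm (Finset.mem_erase.mp hγ).1)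
    field_simp
  rw [Finset.sum_congr rfl hterm1, Finset.sum_congr rfl hterm2,
    ← Finset.sum_div, ← Finset.sum_div, eq_neg_of_add_eq_zero_left hkey, neg_div]
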